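/- Let μ, μ₀ ∈ ℝ, ω², ω₀² > 0, U ∈ ℝ, V ≥ 0. Then (1/2)·log((1+ω²V)/(1+ω₀²V)) + (1/2)·(ω₀²-ω²)U²/((1+ω²V)(1+ω₀²V)) + μ²V/(2(1+ω²V)) - μU/(1+ω²V) - μ₀²V/(2(1+ω₀²V)) + μ₀U/(1+ω₀²V) ≥ -(1/2)·(log(1+ω²/ω₀²) + |ω²-ω₀²|/ω²) - (1/2)·|ω₀²-ω²|·(U/(1+ω₀²V))²·(1+ω₀²/ω²) - |μ|·|U/(1+ω₀²V)|·(1+|ω₀²-ω²|/ω²) - |μ₀²V/(2(1+ω₀²V))| - |μ₀·U/(1+ω₀²V)|. -/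

import Mathlib

/-- Lower bound on the log-likelihood ratio used to verify Wald-type conditions for
strong consistency of the MLE in the Gaussian random-effects SDE model. -/
theorem loglik_ratio_lower_bound
    (μ μ₀ ω2 ω02 U V : ℝ) (hω2 : 0 < ω2) (hω02 : 0 < ω02) (hV : 0 ≤ V) :
    (1/2) * Real.log ((1 + ω2 * V) / (1 + ω02 * V))
      + (1/2) * ((ω02 - ω2) * U ^ 2 / ((1 + ω2 * V) * (1 + ω02 * V)))
      + μ ^ 2 * V / (2 * (1 + ω2 * V)) - μ * U / (1 + ω2 * V)
      - μ₀ ^ 2 * V / (2 * (1 + ω02 * V)) + μ₀ * U / (1 + ω02 * V)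
    ≥ -(1/2) * (Real.log (1 + ω2 / ω02) + |ω2 - ω02| / ω2)
      - (1/2) * |ω02 - ω2| * (U / (1 + ω02 * V)) ^ 2 * (1 + ω02 / ω2)
      - |μ| * |U / (1 + ω02 * V)| * (1 + |ω02 - ω2| / ω2)
      - |μ₀ ^ 2 * V / (2 * (1 + ω02 * V))| - |μ₀ * U / (1 + ω02 * V)| := by
  set A := 1 + ω2 * V with hAdef
  set B := 1 + ω02 * V with hBdef
  have hA : 0 < A := by have := mul_nonneg hω2.le hV; simp [hAdef]; linarith
  have hB : 0 < B := by have := mul_nonneg hω02.le hV; simp [hBdef]; linarith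
  have habs : (0:ℝ) ≤ |ω02 - ω2| := abs_nonneg _
  have habs1 : ω02 - ω2 ≤ |ω02 - ω2| := le_abs_self _
  have habs2 : -(ω02 - ω2) ≤ |ω02 - ω2| := neg_le_abs _
  -- key inequality: ω2 * B ≤ (ω2 + |ω02 - ω2|) * A
  have hkey : ω2 * B ≤ (ω2 + |ω02 - ω2|) * A := by
    simp only [hAdef, hBdef]
    nlinarith [mul_le_mul_of_nonneg_left habs1 (mul_nonneg hω2.le hV),
      mul_nonneg habs (mul_nonneg hω2.le hV)]
  have hkey2 : ω2 * B ≤ (ω2 + ω02) * A := by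
    simp only [hAdef, hBdef]
    nlinarith [mul_nonneg hω02.le (mul_nonneg hω2.le hV)]
  -- Term 1
  have h1 : (1/2) * Real.log (A / B)
      ≥ -(1/2) * (Real.log (1 + ω2 / ω02) + |ω2 - ω02| / ω2) := by
    have hlognn : 0 ≤ Real.log (1 + ω2 / ω02) := by
      apply Real.log_nonneg
      have : 0 ≤ ω2 / ω02 := by positivity
      linarith
    have hBA : B / A ≤ 1 + |ω02 - ω2| / ω2 := by
      rw [div_le_iff₀ hA]
      have : (1 + |ω02 - ω2| / ω2) * A = ((ω2 + |ω02 - ω2|) * A) / ω2 := by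
        field_simp
      rw [this, le_div_iff₀ hω2]
      linarith [hkey]
    have hlogBA : Real.log (B / A) ≤ |ω02 - ω2| / ω2 := by
      calc Real.log (B / A) ≤ B / A - 1 := Real.log_le_sub_one_of_pos (div_pos hB hA)
        _ ≤ |ω02 - ω2| / ω2 := by linarith
    have hlogdiv : Real.log (A / B) = Real.log A - Real.log B :=
      Real.log_div hA.ne' hB.ne'
    have hlogdiv2 : Real.log (B / A) = Real.log B - Real.log A :=
      Real.log_div hB.ne' hA.ne'
    rw [abs_sub_comm ω2 ω02]
    rw [hlogdiv2] at hlogBA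
    rw [hlogdiv]
    linarith
  -- Term 2
  have h2 : (1/2) * ((ω02 - ω2) * U ^ 2 / (A * B))
      ≥ -((1/2) * |ω02 - ω2| * (U / B) ^ 2 * (1 + ω02 / ω2)) := by
    have hU2 : (0:ℝ) ≤ U ^ 2 := sq_nonneg U
    have hstep : U ^ 2 / (A * B) ≤ (U / B) ^ 2 * (1 + ω02 / ω2) := by
      have hrw : (U / B) ^ 2 * (1 + ω02 / ω2) = U ^ 2 * (ω2 + ω02) / (ω2 * B ^ 2) := by
        rw [div_pow]; field_simp
      rw [hrw, div_le_div_iff₀ (by positivity) (by positivity)]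
      nlinarith [mul_le_mul_of_nonneg_left hkey2 (mul_nonneg hU2 hB.le)]
    have hlb : -(|ω02 - ω2| * (U ^ 2 / (A * B))) ≤ (ω02 - ω2) * U ^ 2 / (A * B) := by
      have hq : (0:ℝ) ≤ U ^ 2 / (A * B) := by positivity
      have h := mul_le_mul_of_nonneg_right habs2 hq
      have hassoc : (ω02 - ω2) * U ^ 2 / (A * B) = (ω02 - ω2) * (U ^ 2 / (A * B)) :=
        mul_div_assoc _ _ _
      rw [hassoc]
      nlinarith
    have := mul_le_mul_of_nonneg_left hstep habs
    nlinarith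
  -- Term 3
  have h3 : (0:ℝ) ≤ μ ^ 2 * V / (2 * A) := by positivity
  -- Term 4
  have h4 : μ * U / A ≤ |μ| * |U / B| * (1 + |ω02 - ω2| / ω2) := by
    have hstep : |U| / A ≤ |U| / B * (1 + |ω02 - ω2| / ω2) := by
      have hrw : |U| / B * (1 + |ω02 - ω2| / ω2) = |U| * (ω2 + |ω02 - ω2|) / (ω2 * B) := by
        field_simp
      rw [hrw, div_le_div_iff₀ hA (by positivity)]
      nlinarith [mul_le_mul_of_nonneg_left hkey (abs_nonneg U)]
    calc μ * U / A ≤ |μ * U / A| := le_abs_self _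
      _ = |μ| * (|U| / A) := by rw [abs_div, abs_mul, abs_of_pos hA, mul_div_assoc]
      _ ≤ |μ| * (|U| / B * (1 + |ω02 - ω2| / ω2)) :=
          mul_le_mul_of_nonneg_left hstep (abs_nonneg μ)
      _ = |μ| * |U / B| * (1 + |ω02 - ω2| / ω2) := by
          rw [abs_div, abs_of_pos hB]; ring
  -- Term 5
  have h5 : μ₀ ^ 2 * V / (2 * B) ≤ |μ₀ ^ 2 * V / (2 * B)| := le_abs_self _
  -- Term 6
  have h6 : -|μ₀ * U / B| ≤ μ₀ * U / B := neg_abs_le _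
  linarith
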